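/- Let G be a finite simple graph and A, B ⊆ V(G). Write G = G* ⊔ G^{AB}, where G^{AB} is the union of the connected components of G containing at least one vertex of A and at least one vertex of B, and G* is the union of the remaining components. Then Δ(G,A,B) = σ(G*₋A ⊔ G*₋B) · Δ(G^{AB}, A∩V(G^{AB}), B∩V(G^{AB})), where Δ(H,A,B) = σ(H₋A)·σ(H₋B) − σ(H)·σ(H₋A₋B). -/

import Mathlib

open scoped Classical

/-- The number of independent vertex sets of `G` avoiding the set `W`
(i.e. `σ(G₋W)`, the number of independent sets of `G` with `W` deleted). -/
noncomputable def sigmaDel {V : Type*} [Fintype V] (G : SimpleGraph V) (W : Set V) : ℕ :=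
  (Finset.univ.filter
    (fun s : Finset V => (∀ v ∈ s, v ∉ W) ∧ ∀ u ∈ s, ∀ v ∈ s, ¬ G.Adj u v)).card

/-- The number of independent vertex sets of `G`. -/
noncomputable def sigmaG {V : Type*} [Fintype V] (G : SimpleGraph V) : ℕ :=
  sigmaDel G ∅

/-- The disjoint union of two simple graphs. -/
def disjUnion {V₁ V₂ : Type*} (G₁ : SimpleGraph V₁) (G₂ : SimpleGraph V₂) :
    SimpleGraph (V₁ ⊕ V₂) where
  Adj x y :=
    match x, y with
    | Sum.inl a, Sum.inl b => G₁.Adj a b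
    | Sum.inr a, Sum.inr b => G₂.Adj a b
    | _, _ => False
  symm := ⟨by rintro (a | a) (b | b) h <;> simp_all [SimpleGraph.adj_comm]⟩
  loopless := ⟨by rintro (a | a) h <;> simp_all⟩

/-- `Δ(G, A, B) = σ(G₋A)·σ(G₋B) − σ(G)·σ(G₋A₋B)`, as an integer. -/
noncomputable def deltaG {V : Type*} [Fintype V] (G : SimpleGraph V) (A B : Set V) : ℤ :=
  (sigmaDel G A : ℤ) * sigmaDel G B - (sigmaG G : ℤ) * sigmaDel G (A ∪ B)

open Finset

-- Lemma A
lemma sigmaDel_induce {V : Type*} [Fintype V] (G : SimpleGraph V) (S W : Set V)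
    {instS : Fintype ↥S} :
    @sigmaDel _ instS (G.induce S) {x | (x : V) ∈ W} = sigmaDel G (Sᶜ ∪ W) := by
  classical
  unfold sigmaDel
  apply Finset.card_bij (fun s _ => s.map (Function.Embedding.subtype _))
  · intro s hs
    simp only [mem_filter, mem_univ, true_and, SimpleGraph.comap_adj,
      Set.mem_setOf_eq] at hs ⊢
    refine ⟨?_, ?_⟩
    · rintro v hv
      simp only [Finset.mem_map, Function.Embedding.coe_subtype] at hv
      obtain ⟨x, hx, rfl⟩ := hv
      have h1 := hs.1 x hx
      simp only [Set.mem_union, Set.mem_compl_iff, not_or, not_not]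
      exact ⟨x.2, h1⟩
    · intro u hu v hv
      simp only [Finset.mem_map, Function.Embedding.coe_subtype] at hu hv
      obtain ⟨x, hx, rfl⟩ := hu
      obtain ⟨y, hy, rfl⟩ := hv
      exact hs.2 x hx y hy
  · intro s hs t ht h
    exact Finset.map_injective _ h
  · intro t ht
    simp only [mem_filter, mem_univ, true_and] at ht
    have hsub : ∀ v ∈ t, v ∈ S ∧ v ∉ W := by
      intro v hv
      have := ht.1 v hv
      simp only [Set.mem_union, Set.mem_compl_iff, not_or, not_not] at this
      exact this
    refine ⟨t.subtype (· ∈ S), ?_, ?_⟩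
    · simp only [mem_filter, mem_univ, true_and, SimpleGraph.comap_adj, Set.mem_setOf_eq]
      constructor
      · intro v hv
        simp only [Finset.mem_subtype] at hv
        exact (hsub v hv).2
      · intro u hu v hv
        simp only [Finset.mem_subtype] at hu hv
        exact ht.2 u hu v hv
    · rw [Finset.subtype_map, Finset.filter_true_of_mem (fun v hv => (hsub v hv).1)]

-- Lemma B
lemma sigmaG_disjUnion {V₁ V₂ : Type*} [Fintype V₁] [Fintype V₂]
    (G₁ : SimpleGraph V₁) (G₂ : SimpleGraph V₂) :
    sigmaG (disjUnion G₁ G₂) = sigmaG G₁ * sigmaG G₂ := by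
  classical
  unfold sigmaG sigmaDel
  rw [← Finset.card_product]
  apply Finset.card_bij (fun s _ => (s.toLeft, s.toRight))
  · intro s hs
    simp only [mem_filter, mem_univ, true_and, Finset.mem_product] at hs ⊢
    obtain ⟨-, h2⟩ := hs
    refine ⟨⟨fun v _ => Set.notMem_empty v, fun u hu v hv => ?_⟩,
            fun v _ => Set.notMem_empty v, fun u hu v hv => ?_⟩
    · exact h2 _ (Finset.mem_toLeft.mp hu) _ (Finset.mem_toLeft.mp hv)
    · exact h2 _ (Finset.mem_toRight.mp hu) _ (Finset.mem_toRight.mp hv)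
  · intro s hs t ht h
    have h1 : s.toLeft = t.toLeft := congrArg Prod.fst h
    have h2 : s.toRight = t.toRight := congrArg Prod.snd h
    rw [← Finset.toLeft_disjSum_toRight (u := s), ← Finset.toLeft_disjSum_toRight (u := t),
      h1, h2]
  · rintro ⟨a, b⟩ hab
    simp only [mem_filter, mem_univ, true_and, Finset.mem_product] at hab
    obtain ⟨⟨-, ha⟩, -, hb⟩ := hab
    refine ⟨a.disjSum b, ?_, by simp⟩
    simp only [mem_filter, mem_univ, true_and]
    refine ⟨fun v _ => Set.notMem_empty v, ?_⟩
    rintro (u | u) hu (v | v) hv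
    · rw [Finset.inl_mem_disjSum] at hu hv
      exact ha u hu v hv
    · exact fun h => h
    · exact fun h => h
    · rw [Finset.inr_mem_disjSum] at hu hv
      exact hb u hu v hv

-- Lemma C
lemma sigmaDel_split {V : Type*} [Fintype V] (G : SimpleGraph V) (S W : Set V)
    (hS : ∀ u v, G.Adj u v → (u ∈ S ↔ v ∈ S)) :
    sigmaDel G W = sigmaDel G (Sᶜ ∪ W) * sigmaDel G (S ∪ W) := by
  classical
  unfold sigmaDel
  rw [← Finset.card_product]
  apply Finset.card_bij (fun s _ => (s.filter (fun v => v ∈ S), s.filter (fun v => v ∉ S)))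
  · intro s hs
    simp only [mem_filter, mem_univ, true_and, Finset.mem_product] at hs ⊢
    obtain ⟨h1, h2⟩ := hs
    refine ⟨⟨?_, ?_⟩, ?_, ?_⟩
    · intro v hv
      simp only [Set.mem_union, Set.mem_compl_iff, not_or, not_not]
      exact ⟨hv.2, h1 v hv.1⟩
    · intro u hu v hv
      exact h2 u hu.1 v hv.1
    · intro v hv
      simp only [Set.mem_union, not_or]
      exact ⟨hv.2, h1 v hv.1⟩
    · intro u hu v hv
      exact h2 u hu.1 v hv.1
  · intro s hs t ht h
    have h1 : s.filter (fun v => v ∈ S) = t.filter (fun v => v ∈ S) := congrArg Prod.fst h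
    have h2 : s.filter (fun v => v ∉ S) = t.filter (fun v => v ∉ S) := congrArg Prod.snd h
    rw [← Finset.filter_union_filter_not_eq (fun v => v ∈ S) s, h1, h2,
      Finset.filter_union_filter_not_eq]
  · rintro ⟨a, b⟩ hab
    simp only [mem_filter, mem_univ, true_and, Finset.mem_product] at hab
    obtain ⟨⟨ha1, ha2⟩, hb1, hb2⟩ := hab
    have haS : ∀ v ∈ a, v ∈ S ∧ v ∉ W := by
      intro v hv
      have := ha1 v hv
      simp only [Set.mem_union, Set.mem_compl_iff, not_or, not_not] at this
      exact this
    have hbS : ∀ v ∈ b, v ∉ S ∧ v ∉ W := by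
      intro v hv
      have := hb1 v hv
      simp only [Set.mem_union, not_or] at this
      exact this
    refine ⟨a ∪ b, ?_, ?_⟩
    · simp only [mem_filter, mem_univ, true_and]
      constructor
      · intro v hv
        rcases Finset.mem_union.mp hv with h | h
        · exact (haS v h).2
        · exact (hbS v h).2
      · intro u hu v hv
        rcases Finset.mem_union.mp hu with h | h <;> rcases Finset.mem_union.mp hv with h' | h'
        · exact ha2 u h v h'
        · intro hadj
          exact (hbS v h').1 ((hS u v hadj).mp (haS u h).1)
        · intro hadj
          exact (hbS u h).1 ((hS u v hadj).mpr (haS v h').1)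
        · exact hb2 u h v h'
    · have hfa : (a ∪ b).filter (fun v => v ∈ S) = a := by
        rw [Finset.filter_union, Finset.filter_true_of_mem (fun v hv => (haS v hv).1),
          Finset.filter_false_of_mem (fun v hv => (hbS v hv).1), Finset.union_empty]
      have hfb : (a ∪ b).filter (fun v => v ∉ S) = b := by
        rw [Finset.filter_union, Finset.filter_false_of_mem, Finset.filter_true_of_mem
          (fun v hv => (hbS v hv).1), Finset.empty_union]
        intro v hv
        simp only [not_not]
        exact (haS v hv).1
      rw [hfa, hfb]

theorem delta_component_decomposition {V : Type*} [Fintype V] (G : SimpleGraph V)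
    (A B : Set V) :
    -- `VAB` : vertices whose connected component meets both `A` and `B`
    ∀ VAB : Set V, VAB = {v | (∃ a ∈ A, G.Reachable v a) ∧ (∃ b ∈ B, G.Reachable v b)} →
    deltaG G A B =
      (sigmaG (disjUnion (G.induce (VABᶜ \ A)) (G.induce (VABᶜ \ B))) : ℤ) *
        deltaG (G.induce VAB) {x | (x : V) ∈ A} {x | (x : V) ∈ B} := by
  intro T hT
  classical
  set P : Set V := {v | v ∉ T ∧ ∃ a ∈ A, G.Reachable v a} with hPdef
  have hTmem : ∀ v, v ∈ T ↔ (∃ a ∈ A, G.Reachable v a) ∧ (∃ b ∈ B, G.Reachable v b) := by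
    intro v; rw [hT]; simp only [Set.mem_setOf_eq]
  have hTc : ∀ u v, G.Adj u v → (u ∈ T ↔ v ∈ T) := by
    intro u v huv
    rw [hTmem, hTmem]
    constructor
    · rintro ⟨⟨a, ha, hra⟩, b, hb, hrb⟩
      exact ⟨⟨a, ha, huv.symm.reachable.trans hra⟩, b, hb, huv.symm.reachable.trans hrb⟩
    · rintro ⟨⟨a, ha, hra⟩, b, hb, hrb⟩
      exact ⟨⟨a, ha, huv.reachable.trans hra⟩, b, hb, huv.reachable.trans hrb⟩
  have hPmem : ∀ v, v ∈ P ↔ v ∉ T ∧ ∃ a ∈ A, G.Reachable v a := by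
    intro v; rw [hPdef]; simp only [Set.mem_setOf_eq]
  have hPc : ∀ u v, G.Adj u v → (u ∈ P ↔ v ∈ P) := by
    intro u v huv
    rw [hPmem, hPmem]
    constructor
    · rintro ⟨hu, a, ha, hra⟩
      exact ⟨fun hvT => hu ((hTc u v huv).mpr hvT), a, ha, huv.symm.reachable.trans hra⟩
    · rintro ⟨hv, a, ha, hra⟩
      exact ⟨fun huT => hv ((hTc u v huv).mp huT), a, ha, huv.reachable.trans hra⟩
  have hAsub : ∀ a ∈ A, a ∈ T ∨ a ∈ P := by
    intro a ha
    by_cases h : a ∈ T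
    · exact Or.inl h
    · exact Or.inr ((hPmem a).mpr ⟨h, a, ha, SimpleGraph.Reachable.refl a⟩)
  have hBsub : ∀ b ∈ B, b ∉ P := by
    intro b hb hbP
    obtain ⟨hbT, a, ha, hra⟩ := (hPmem b).mp hbP
    exact hbT ((hTmem b).mpr ⟨⟨a, ha, hra⟩, b, hb, SimpleGraph.Reachable.refl b⟩)
  -- set identities
  have sq1 : P ∪ (T ∪ A) = P ∪ T := by
    ext v
    simp only [Set.mem_union]
    constructor
    · rintro (h | h | h)
      · exact Or.inl h
      · exact Or.inr h
      · rcases hAsub v h with h' | h'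
        · exact Or.inr h'
        · exact Or.inl h'
    · rintro (h | h)
      · exact Or.inl h
      · exact Or.inr (Or.inl h)
  have sq2 : Pᶜ ∪ (T ∪ B) = Pᶜ ∪ T := by
    ext v
    simp only [Set.mem_union, Set.mem_compl_iff]
    constructor
    · rintro (h | h | h)
      · exact Or.inl h
      · exact Or.inr h
      · exact Or.inl (hBsub v h)
    · rintro (h | h)
      · exact Or.inl h
      · exact Or.inr (Or.inl h)
  have sq3 : Pᶜ ∪ (T ∪ (A ∪ B)) = Pᶜ ∪ (T ∪ A) := by
    ext v
    simp only [Set.mem_union, Set.mem_compl_iff]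
    constructor
    · rintro (h | h | h | h)
      · exact Or.inl h
      · exact Or.inr (Or.inl h)
      · exact Or.inr (Or.inr h)
      · exact Or.inl (hBsub v h)
    · rintro (h | h | h)
      · exact Or.inl h
      · exact Or.inr (Or.inl h)
      · exact Or.inr (Or.inr (Or.inl h))
  have sq4 : P ∪ (T ∪ (A ∪ B)) = P ∪ (T ∪ B) := by
    ext v
    simp only [Set.mem_union]
    constructor
    · rintro (h | h | h | h)
      · exact Or.inl h
      · exact Or.inr (Or.inl h)
      · rcases hAsub v h with h' | h'
        · exact Or.inr (Or.inl h')
        · exact Or.inl h'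
      · exact Or.inr (Or.inr h)
    · rintro (h | h | h)
      · exact Or.inl h
      · exact Or.inr (Or.inl h)
      · exact Or.inr (Or.inr (Or.inr h))
  have scA : (Tᶜ \ A)ᶜ = T ∪ A := by
    ext v; simp [Set.mem_diff]; tauto
  have scB : (Tᶜ \ B)ᶜ = T ∪ B := by
    ext v; simp [Set.mem_diff]; tauto
  -- first-level splits
  have eA := sigmaDel_split G T A hTc
  have eB := sigmaDel_split G T B hTc
  have eAB := sigmaDel_split G T (A ∪ B) hTc
  have e0 : sigmaDel G (∅ : Set V) = sigmaDel G Tᶜ * sigmaDel G T := by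
    have h := sigmaDel_split G T (∅ : Set V) hTc
    rwa [Set.union_empty, Set.union_empty] at h
  -- second-level splits
  have fA : sigmaDel G (T ∪ A) = sigmaDel G (Pᶜ ∪ (T ∪ A)) * sigmaDel G (P ∪ T) := by
    rw [sigmaDel_split G P (T ∪ A) hPc, sq1]
  have fB : sigmaDel G (T ∪ B) = sigmaDel G (Pᶜ ∪ T) * sigmaDel G (P ∪ (T ∪ B)) := by
    rw [sigmaDel_split G P (T ∪ B) hPc, sq2]
  have f0 : sigmaDel G T = sigmaDel G (Pᶜ ∪ T) * sigmaDel G (P ∪ T) :=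
    sigmaDel_split G P T hPc
  have fAB : sigmaDel G (T ∪ (A ∪ B)) =
      sigmaDel G (Pᶜ ∪ (T ∪ A)) * sigmaDel G (P ∪ (T ∪ B)) := by
    rw [sigmaDel_split G P (T ∪ (A ∪ B)) hPc, sq3, sq4]
  -- RHS pieces
  have hemptyA : ({x : ↥(Tᶜ \ A) | (x : V) ∈ (∅ : Set V)}) = (∅ : Set ↥(Tᶜ \ A)) := by
    ext x; simp
  have hemptyB : ({x : ↥(Tᶜ \ B) | (x : V) ∈ (∅ : Set V)}) = (∅ : Set ↥(Tᶜ \ B)) := by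
    ext x; simp
  have hemptyT : ({x : ↥T | (x : V) ∈ (∅ : Set V)}) = (∅ : Set ↥T) := by
    ext x; simp
  have gA : sigmaG (G.induce (Tᶜ \ A)) = sigmaDel G (T ∪ A) := by
    rw [sigmaG, ← hemptyA, sigmaDel_induce, Set.union_empty, scA]
  have gB : sigmaG (G.induce (Tᶜ \ B)) = sigmaDel G (T ∪ B) := by
    rw [sigmaG, ← hemptyB, sigmaDel_induce, Set.union_empty, scB]
  have hA' : sigmaDel (G.induce T) {x | (x : V) ∈ A} = sigmaDel G (Tᶜ ∪ A) :=
    sigmaDel_induce G T A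
  have hB' : sigmaDel (G.induce T) {x | (x : V) ∈ B} = sigmaDel G (Tᶜ ∪ B) :=
    sigmaDel_induce G T B
  have h0' : sigmaG (G.induce T) = sigmaDel G Tᶜ := by
    rw [sigmaG, ← hemptyT, sigmaDel_induce, Set.union_empty]
  have hAB' : sigmaDel (G.induce T) ({x | (x : V) ∈ A} ∪ {x | (x : V) ∈ B}) =
      sigmaDel G (Tᶜ ∪ (A ∪ B)) := by
    have h : ({x : ↥T | (x : V) ∈ A} ∪ {x | (x : V) ∈ B}) = {x : ↥T | (x : V) ∈ A ∪ B} := by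
      ext x; simp [Set.mem_union]
    rw [h, sigmaDel_induce]
  simp only [deltaG]
  rw [sigmaG_disjUnion, gA, gB, hA', hB', h0', hAB']
  rw [show sigmaG G = sigmaDel G (∅ : Set V) from rfl]
  rw [eA, eB, eAB, e0, fA, fB, f0, fAB]
  push_cast
  ring
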